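/- Conversely, if a hypergraph admits a join tree, then it has a GYO reduction order: any leaf of the join tree is an ear (its intersection with the union of all other hyperedges is contained in its tree-neighbor), and removing leaves repeatedly yields a full reduction order. -/

import Mathlib

/-- `e i` is an ear of the sub-hypergraph with edge set `H`:
some other edge of `H` contains all vertices `e i` shares with the rest of `H`. -/
def IsEarOf {V : Type*} {n : ℕ} (e : Fin n → Finset V) (H : Set (Fin n))
    (i : Fin n) : Prop :=
  ∃ j ∈ H, j ≠ i ∧
    ((e i : Set V) ∩ ⋃ k ∈ H \ {i}, (e k : Set V)) ⊆ (e j : Set V)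

/-- A join tree for the hypergraph with edges `e`: a tree on the edges such that
for every vertex the edges containing it induce a connected subtree. -/
def IsJoinTree {V : Type*} {n : ℕ} (e : Fin n → Finset V)
    (T : SimpleGraph (Fin n)) : Prop :=
  T.IsTree ∧ ∀ v : V, (T.induce {i | v ∈ e i}).Preconnected

open SimpleGraph

private lemma frontier_lemma {n : ℕ} {T : SimpleGraph (Fin n)} {t : Set (Fin n)}
    {x y : Fin n} (w : T.Walk x y) : x ∈ t → y ∉ t →
    ∃ a ∈ t, ∃ b, b ∉ t ∧ T.Adj a b := by
  induction w with
  | nil => intro hx hy; exact absurd hx hy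
  | @cons a b c h w ih =>
    intro hx hy
    by_cases hb : b ∈ t
    · exact ih hb hy
    · exact ⟨a, hx, b, hb, h⟩

private lemma build_lemma {n : ℕ} {T : SimpleGraph (Fin n)} (hpre : T.Preconnected)
    (hn : 0 < n) :
    ∀ j, 0 < j → j ≤ n → ∃ f : ℕ → Fin n,
      (∀ a b, a < j → b < j → f a = f b → a = b) ∧
      (∀ k, 0 < k → k < j → ∃ m, m < k ∧ T.Adj (f k) (f m)) := by
  intro j
  induction j with
  | zero => omega
  | succ j ih =>
    intro _ hj
    rcases Nat.eq_zero_or_pos j with rfl | hj0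
    · exact ⟨fun _ => ⟨0, hn⟩, fun a b ha hb _ => by omega, fun k h1 h2 => by omega⟩
    · obtain ⟨f, hinj, hadj⟩ := ih hj0 (by omega)
      set s : Finset (Fin n) := (Finset.range j).image f with hs
      have hmem : ∀ z, z ∈ s ↔ ∃ m, m < j ∧ f m = z := by
        intro z
        simp [hs, Finset.mem_image, Finset.mem_range]
      have hcard : s.card = j := by
        rw [hs, Finset.card_image_of_injOn, Finset.card_range]
        intro a ha b hb hab
        exact hinj a b (Finset.mem_range.mp ha) (Finset.mem_range.mp hb) hab
      have hne : s ≠ Finset.univ := by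
        intro h
        rw [h, Finset.card_univ, Fintype.card_fin] at hcard
        omega
      obtain ⟨y, hy⟩ : ∃ y, y ∉ s := by
        by_contra hc
        push_neg at hc
        exact hne (Finset.eq_univ_iff_forall.mpr hc)
      have hx : f 0 ∈ s := (hmem _).mpr ⟨0, hj0, rfl⟩
      obtain ⟨w⟩ := hpre (f 0) y
      obtain ⟨a, ha, b, hb, hab⟩ :=
        frontier_lemma (t := (↑s : Set (Fin n))) w hx hy
      obtain ⟨ma, hma, hfa⟩ := (hmem a).mp ha
      refine ⟨fun m => if m = j then b else f m, ?_, ?_⟩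
      · intro a' b' ha' hb' h
        by_cases h1 : a' = j <;> by_cases h2 : b' = j <;> simp [h1, h2] at h ⊢
        · exact absurd ((hmem _).mpr ⟨b', by omega, h.symm⟩) hb
        · exact absurd ((hmem _).mpr ⟨a', by omega, h⟩) hb
        · exact hinj a' b' (by omega) (by omega) h
      · intro k h1 h2
        by_cases hk : k = j
        · refine ⟨ma, by omega, ?_⟩
          simp only [hk, if_pos rfl, if_neg (by omega : ma ≠ j)]
          rw [hfa]
          exact hab.symm
        · obtain ⟨m, hm, hadj'⟩ := hadj k h1 (by omega)
          refine ⟨m, hm, ?_⟩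
          simp only [if_neg hk, if_neg (by omega : m ≠ j)]
          exact hadj'

private lemma anchor_lemma {n : ℕ} {T : SimpleGraph (Fin n)} (f : ℕ → Fin n)
    (hadj : ∀ k, 0 < k → k < n → ∃ m, m < k ∧ T.Adj (f k) (f m)) :
    ∀ K, K < n → ∀ x, (∃ m, m ≤ K ∧ f m = x) →
      ∃ w : T.Walk x (f 0), ∀ z ∈ w.support, ∃ m, m ≤ K ∧ f m = z := by
  intro K
  induction K with
  | zero =>
    rintro _ x ⟨m, hm, rfl⟩
    interval_cases m
    exact ⟨Walk.nil, by simp⟩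
  | succ K ih =>
    rintro hK x ⟨m, hm, rfl⟩
    by_cases hmK : m ≤ K
    · obtain ⟨w, hw⟩ := ih (by omega) (f m) ⟨m, hmK, rfl⟩
      exact ⟨w, fun z hz => by obtain ⟨m', h1, h2⟩ := hw z hz; exact ⟨m', by omega, h2⟩⟩
    · have hm' : m = K + 1 := by omega
      subst hm'
      obtain ⟨m₀, hm₀, hadj'⟩ := hadj (K + 1) (by omega) hK
      obtain ⟨w, hw⟩ := ih (by omega) (f m₀) ⟨m₀, by omega, rfl⟩
      refine ⟨Walk.cons hadj' w, ?_⟩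
      intro z hz
      rw [Walk.support_cons] at hz
      rcases List.mem_cons.mp hz with rfl | hz
      · exact ⟨K + 1, le_rfl, rfl⟩
      · obtain ⟨m', h1, h2⟩ := hw z hz
        exact ⟨m', by omega, h2⟩

private lemma conn_lemma {n : ℕ} {T : SimpleGraph (Fin n)} (f : ℕ → Fin n)
    (hadj : ∀ k, 0 < k → k < n → ∃ m, m < k ∧ T.Adj (f k) (f m))
    {K : ℕ} (hK : K < n) {x y : Fin n}
    (hx : ∃ m, m ≤ K ∧ f m = x) (hy : ∃ m, m ≤ K ∧ f m = y) :
    ∃ w : T.Walk x y, ∀ z ∈ w.support, ∃ m, m ≤ K ∧ f m = z := by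
  obtain ⟨wx, hwx⟩ := anchor_lemma f hadj K hK x hx
  obtain ⟨wy, hwy⟩ := anchor_lemma f hadj K hK y hy
  refine ⟨wx.append wy.reverse, ?_⟩
  intro z hz
  rcases (Walk.mem_support_append_iff _ _).mp hz with hz | hz
  · exact hwx z hz
  · rw [Walk.support_reverse, List.mem_reverse] at hz
    exact hwy z hz

theorem join_tree_implies_gyo_order {V : Type*} {n : ℕ}
    (e : Fin n → Finset V) (T : SimpleGraph (Fin n))
    (hT : IsJoinTree e T) :
    ∃ p : Equiv.Perm (Fin n), ∀ i : Fin n, (i : ℕ) + 1 < n →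
      IsEarOf e {x | ∃ j : Fin n, i ≤ j ∧ p j = x} (p i) := by
  obtain ⟨htree, hjoin⟩ := hT
  have hconn := htree.isConnected
  have hn : 0 < n := Fin.pos_iff_nonempty.mpr hconn.nonempty
  obtain ⟨f, hinj, hadj⟩ := build_lemma hconn.preconnected hn n hn le_rfl
  have hg : Function.Injective (fun i : Fin n => f (n - 1 - (i : ℕ))) := by
    intro a b h
    have h1 := hinj _ _ (by omega) (by omega) h
    have ha := a.2; have hb := b.2
    exact Fin.ext (by omega)
  let p : Equiv.Perm (Fin n) :=
    Equiv.ofBijective _ (Finite.injective_iff_bijective.mp hg)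
  refine ⟨p, ?_⟩
  intro i hi
  have hi2 : (i : ℕ) < n := i.2
  set K : ℕ := n - 1 - (i : ℕ) with hKdef
  have hKn : K < n := by omega
  have hK1 : 0 < K := by omega
  have hpi : p i = f K := rfl
  have hH : {x | ∃ j : Fin n, i ≤ j ∧ p j = x} = {x | ∃ m, m ≤ K ∧ f m = x} := by
    ext x
    constructor
    · rintro ⟨j, hij, rfl⟩
      have hij' : (i : ℕ) ≤ (j : ℕ) := hij
      exact ⟨n - 1 - (j : ℕ), by have := j.2; omega, rfl⟩
    · rintro ⟨m, hm, rfl⟩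
      refine ⟨⟨n - 1 - m, by omega⟩, ?_, ?_⟩
      · show (i : ℕ) ≤ n - 1 - m
        omega
      · show f (n - 1 - (n - 1 - m)) = f m
        congr 1
        omega
  rw [hH, hpi]
  -- the distinguished neighbor
  obtain ⟨m₀, hm₀, hadj0⟩ := hadj K hK1 hKn
  have hpu := isAcyclic_iff_path_unique.mp htree.IsAcyclic
  -- uniqueness of the neighbor of f K among earlier vertices
  have huniq : ∀ b : Fin n, T.Adj (f K) b → (∃ m, m < K ∧ f m = b) → b = f m₀ := by
    rintro b hb ⟨m₁, hm₁, rfl⟩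
    by_contra hne
    have hp1 : (Walk.cons hb.symm (Walk.cons hadj0 Walk.nil) :
        T.Walk (f m₁) (f m₀)).IsPath := by
      rw [Walk.isPath_def]
      simp [hb.ne', hadj0.ne, hne]
    obtain ⟨w2, hw2⟩ := conn_lemma f hadj (by omega : K - 1 < n)
      (⟨m₁, by omega, rfl⟩ : ∃ m, m ≤ K - 1 ∧ f m = f m₁)
      (⟨m₀, by omega, rfl⟩ : ∃ m, m ≤ K - 1 ∧ f m = f m₀)
    have heq := hpu ⟨_, hp1⟩ ⟨w2.bypass, w2.bypass_isPath⟩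
    have hKmem : f K ∈ (Walk.cons hb.symm (Walk.cons hadj0 Walk.nil) :
        T.Walk (f m₁) (f m₀)).support := by simp
    have hKmem2 : f K ∈ w2.bypass.support := by
      have := congrArg Subtype.val heq
      simp only at this
      rw [this] at hKmem
      exact hKmem
    obtain ⟨m, hm, hfm⟩ := hw2 _ (w2.support_bypass_subset hKmem2)
    have := hinj m K (by omega) hKn hfm
    omega
  refine ⟨f m₀, ⟨m₀, le_of_lt hm₀, rfl⟩, fun h => by
    have := hinj m₀ K (by omega) hKn h; omega, ?_⟩
  rintro v ⟨hv1, hv2⟩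
  simp only [Set.mem_iUnion, exists_prop] at hv2
  obtain ⟨x, hxH, hvx⟩ := hv2
  obtain ⟨⟨m₁, hm₁, rfl⟩, hxne⟩ := hxH
  have hxne' : f m₁ ≠ f K := hxne
  have hm₁K : m₁ < K := by
    rcases Nat.lt_or_ge m₁ K with h | h
    · exact h
    · exact absurd (congrArg f (by omega : m₁ = K)) hxne'
  -- walk inside the set of edges containing v
  have hv1' : v ∈ e (f K) := hv1
  obtain ⟨wW0⟩ := hjoin v ⟨f K, hv1'⟩ ⟨f m₁, hvx⟩
  let wW : T.Walk (f K) (f m₁) := wW0.map (Embedding.induce {i | v ∈ e i}).toHom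
  have hWsupp : ∀ z ∈ wW.support, v ∈ e z := by
    intro z hz
    change z ∈ (Walk.map (Embedding.induce {i | v ∈ e i}).toHom wW0).support at hz
    rw [Walk.support_map] at hz
    obtain ⟨⟨z', hz'⟩, _, rfl⟩ := List.mem_map.mp hz
    exact hz'
  -- walk inside the remaining edges
  obtain ⟨wS, hwS⟩ := conn_lemma f hadj hKn
    (⟨K, le_rfl, rfl⟩ : ∃ m, m ≤ K ∧ f m = f K)
    (⟨m₁, by omega, rfl⟩ : ∃ m, m ≤ K ∧ f m = f m₁)
  have heq := hpu ⟨wW.bypass, wW.bypass_isPath⟩ ⟨wS.bypass, wS.bypass_isPath⟩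
  have heq' : wW.bypass = wS.bypass := congrArg Subtype.val heq
  obtain ⟨q, hqW, hqS⟩ : ∃ q : T.Walk (f K) (f m₁),
      (∀ z ∈ q.support, v ∈ e z) ∧ (∀ z ∈ q.support, ∃ m, m ≤ K ∧ f m = z) :=
    ⟨wW.bypass, fun z hz => hWsupp z (wW.support_bypass_subset hz),
      fun z hz => hwS z (wS.support_bypass_subset (heq' ▸ hz))⟩
  have hqnil : ¬ q.Nil := Walk.not_nil_of_ne hxne'.symm
  set b := q.getVert 1 with hbdef
  have h : T.Adj (f K) b := by
    have := q.adj_snd hqnil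
    simpa using this
  have hbsupp : b ∈ q.support :=
    Walk.mem_support_iff_exists_getVert.mpr ⟨1, rfl, by
      rw [Walk.not_nil_iff_lt_length] at hqnil; omega⟩
  have hbW : v ∈ e b := hqW b hbsupp
  obtain ⟨m, hm, hfm⟩ := hqS b hbsupp
  have hmK : m < K := by
    rcases Nat.lt_or_ge m K with h' | h'
    · exact h'
    · exfalso
      have : m = K := by omega
      rw [this] at hfm
      exact h.ne hfm
  have hb : b = f m₀ := huniq b h ⟨m, hmK, hfm⟩
  rw [hb] at hbW
  exact hbW
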